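/- Let R be a commutative ring, let x₁, …, x_s be a d-sequence in R, let Q = (x₁, …, x_s), and let W = (0) : Q. Let M be an ideal of R with Q ⊆ M. Then W : M = W. -/

import Mathlib

open Ideal IsLocalRing

/-- A sequence `x₁, …, x_s` is a `d`-sequence. -/
def IsDSeq {R : Type*} [CommRing R] {s : ℕ} (x : Fin s → R) : Prop :=
  ∀ i j : Fin s, i ≤ j →
    (Ideal.span (x '' {k | k < i})).colon (Ideal.span {x i}) =
    (Ideal.span (x '' {k | k < i})).colon (Ideal.span {x i * x j})

/-- A strong `d`-sequence: all power sequences are `d`-sequences. -/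
def IsStrongDSeq {R : Type*} [CommRing R] {s : ℕ} (x : Fin s → R) : Prop :=
  ∀ n : Fin s → ℕ, (∀ i, 1 ≤ n i) → IsDSeq (fun i => x i ^ n i)

/-- `x₁, …, x_d` is a system of parameters of the local ring `A`. -/
def IsSOP {A : Type*} [CommRing A] [IsLocalRing A] {d : ℕ} (x : Fin d → A) : Prop :=
  ringKrullDim A = d ∧ (Ideal.span (Set.range x)).radical = maximalIdeal A

/-- `Q` is a parameter ideal: generated by a system of parameters. -/
def IsParameterIdeal (A : Type*) [CommRing A] [IsLocalRing A] (Q : Ideal A) : Prop :=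
  ∃ (d : ℕ) (x : Fin d → A), IsSOP x ∧ Q = Ideal.span (Set.range x)

/-- A Buchsbaum local ring: every system of parameters is a weak `A`-sequence. -/
def IsBuchsbaum (A : Type*) [CommRing A] [IsLocalRing A] : Prop :=
  ∀ (d : ℕ) (x : Fin d → A), IsSOP x →
    ∀ i : Fin d,
      (Ideal.span (x '' {k | k < i})).colon (Ideal.span {x i}) =
      (Ideal.span (x '' {k | k < i})).colon (maximalIdeal A)

/-- The 0-th local cohomology `H⁰_𝔪(A)`, as the ideal of elements killed by a power of `𝔪`. -/
noncomputable def H0 (A : Type*) [CommRing A] [IsLocalRing A] : Ideal A :=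
  ⨆ n : ℕ, (⊥ : Ideal A).colon ((maximalIdeal A) ^ n : Ideal A)

/-- The length of a module, as the Krull dimension of its submodule lattice (valued in `ℕ∞`). -/
noncomputable def moduleLength (R M : Type*) [Ring R] [AddCommGroup M] [Module R M] : ℕ∞ :=
  (Order.krullDim (Submodule R M)).unbotD 0

/-- `ℓ_A(I/Q)`: the length of `I/Q`. -/
noncomputable def quotLength {A : Type*} [CommRing A] (Q I : Ideal A) : ℕ∞ :=
  moduleLength (A ⧸ Q) (I.map (Ideal.Quotient.mk Q))

/-- `r(A)`: the supremum of the indices of reducibility of parameter ideals. -/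
noncomputable def typeR (A : Type*) [CommRing A] [IsLocalRing A] : ℕ∞ :=
  ⨆ Q ∈ {Q : Ideal A | IsParameterIdeal A Q}, quotLength Q (Q.colon (maximalIdeal A))

/-- The reduction number `r_Q(I) = min{n ≥ 0 ∣ I^{n+1} = Q Iⁿ}`. -/
noncomputable def reductionNumber {A : Type*} [CommRing A] (Q I : Ideal A) : ℕ :=
  sInf {n : ℕ | I ^ (n + 1) = Q * I ^ n}

/-- `x` is integral over the ideal `Q`. -/
def IsIntegralOverIdeal {A : Type*} [CommRing A] (Q : Ideal A) (x : A) : Prop :=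
  ∃ n : ℕ, 0 < n ∧ ∃ c : ℕ → A, (∀ i ∈ Finset.Icc 1 n, c i ∈ Q ^ i) ∧
    x ^ n + ∑ i ∈ Finset.Icc 1 n, c i * x ^ (n - i) = 0

/-- `A` has Hilbert–Samuel multiplicity `e` (with respect to its maximal ideal). -/
def HasHSMultiplicity (A : Type*) [CommRing A] [IsLocalRing A] (e : ℕ) : Prop :=
  ∃ d : ℕ, ringKrullDim A = d ∧
    Filter.Tendsto
      (fun n : ℕ =>
        ((d.factorial : ℝ) * ((moduleLength A (A ⧸ (maximalIdeal A) ^ n)).toNat : ℝ)) / (n : ℝ) ^ d)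
      Filter.atTop (nhds (e : ℝ))

/-- The local ring `A` has depth `n`. -/
def HasDepth (A : Type*) [CommRing A] [IsLocalRing A] (n : ℕ) : Prop :=
  (∃ rs : List A, rs.length = n ∧ (∀ a ∈ rs, a ∈ maximalIdeal A) ∧
      RingTheory.Sequence.IsRegular A rs) ∧
    ∀ rs : List A, (∀ a ∈ rs, a ∈ maximalIdeal A) → RingTheory.Sequence.IsRegular A rs →
      rs.length ≤ n


private lemma auxzero {R : Type*} [CommRing R] {s : ℕ} (x : Fin s → R)
    (hx : ∀ i j : Fin s, i ≤ j →
      (Ideal.span (x '' {k | k < i})).colon (Ideal.span {x i}) =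
      (Ideal.span (x '' {k | k < i})).colon (Ideal.span {x i * x j}))
    (y : R) (hy : ∀ i, y * x i = 0) :
    ∀ m, m ≤ s → y ∈ Ideal.span (x '' {k : Fin s | (k : ℕ) < m}) → y = 0 := by
  intro m
  induction m with
  | zero =>
    intro _ hmem
    have he : (x '' {k : Fin s | (k : ℕ) < 0}) = ∅ := by ext a; simp
    rw [he, Ideal.span_empty, Ideal.mem_bot] at hmem
    exact hmem
  | succ m ih =>
    intro hms hmem
    have hm : m < s := hms
    set i : Fin s := ⟨m, hm⟩ with hi
    have hset : {k : Fin s | (k : ℕ) < m + 1} = insert i {k : Fin s | (k : ℕ) < m} := by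
      ext k
      simp only [Set.mem_setOf_eq, Set.mem_insert_iff, Nat.lt_succ_iff]
      constructor
      · intro h
        rcases eq_or_lt_of_le h with h' | h'
        · left; exact Fin.ext h'
        · right; exact h'
      · rintro (rfl | h)
        · exact le_refl m
        · exact le_of_lt h
    rw [hset, Set.image_insert_eq, Ideal.span_insert] at hmem
    rcases Submodule.mem_sup.mp hmem with ⟨z₁, hz₁, z₂, hz₂, hyz⟩
    rcases Ideal.mem_span_singleton.mp hz₁ with ⟨c, rfl⟩
    have hSi : {k : Fin s | k < i} = {k : Fin s | (k : ℕ) < m} := by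
      ext k; simp [Fin.lt_def, hi]
    have heq : c * (x i * x i) = -(z₂ * x i) := by
      have h0 := hy i
      rw [← hyz] at h0
      linear_combination h0
    have hcx : c ∈ (Ideal.span (x '' {k : Fin s | (k : ℕ) < m})).colon
        (Ideal.span {x i * x i}) := by
      rw [Ideal.mem_colon_span_singleton, heq]
      exact neg_mem (Ideal.mul_mem_right _ _ hz₂)
    have hd := hx i i le_rfl
    rw [hSi] at hd
    rw [← hd, Ideal.mem_colon_span_singleton] at hcx
    have : y ∈ Ideal.span (x '' {k : Fin s | (k : ℕ) < m}) := by
      rw [← hyz]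
      exact add_mem (by rwa [mul_comm]) hz₂
    exact ih (le_of_lt hm) this

theorem stmt4 {R : Type*} [CommRing R] {s : ℕ} (hs : 1 ≤ s) (x : Fin s → R)
    (hx : IsDSeq x) (M : Ideal R) (hQM : Ideal.span (Set.range x) ≤ M) :
    ((⊥ : Ideal R).colon (Ideal.span (Set.range x))).colon M =
      (⊥ : Ideal R).colon (Ideal.span (Set.range x)) := by
  apply le_antisymm
  · intro a ha
    have key : ∀ i : Fin s, a * x i = 0 := by
      intro i
      have hxi : x i ∈ Ideal.span (Set.range x) := Ideal.subset_span ⟨i, rfl⟩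
      have hyW : a * x i ∈ (⊥ : Ideal R).colon (Ideal.span (Set.range x)) := by
        simpa using Submodule.mem_colon.mp ha (x i) (hQM hxi)
      have hy : ∀ j, (a * x i) * x j = 0 := fun j => by
        simpa using Submodule.mem_colon.mp hyW (x j) (Ideal.subset_span ⟨j, rfl⟩)
      have hrange : x '' {k : Fin s | (k : ℕ) < s} = Set.range x := by
        ext b; constructor
        · rintro ⟨k, -, rfl⟩; exact ⟨k, rfl⟩
        · rintro ⟨k, rfl⟩; exact ⟨k, k.isLt, rfl⟩
      have hmem : a * x i ∈ Ideal.span (x '' {k : Fin s | (k : ℕ) < s}) := by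
        rw [hrange]; exact Ideal.mul_mem_left _ a hxi
      exact auxzero x hx (a * x i) hy s le_rfl hmem
    rw [Submodule.mem_colon]
    intro p hp
    rw [Ideal.mem_bot, smul_eq_mul]
    induction hp using Submodule.span_induction with
    | mem p hp => obtain ⟨i, rfl⟩ := hp; exact key i
    | zero => exact mul_zero a
    | add p q _ _ hp hq => rw [mul_add, hp, hq, add_zero]
    | smul r p _ hp => rw [smul_eq_mul, ← mul_assoc, mul_comm a r, mul_assoc, hp, mul_zero]
  · intro a ha
    rw [Submodule.mem_colon]
    intro p hpM
    rw [Submodule.mem_colon]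
    intro q hq
    have h0 : a * q = 0 := by simpa using Submodule.mem_colon.mp ha q hq
    rw [Ideal.mem_bot, smul_eq_mul, smul_eq_mul]
    rw [mul_comm a p, mul_assoc, h0, mul_zero]
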